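/- Under the same hypotheses as above, assume additionally x/|x| ∈ S_ε := {θ ∈ S^{n-1} : |Ω_ε(θ)| > ε} and ∫ g ≥ 1 − ε. Then ∫_{B(0,r)} |Ω_ε((x−y)/|x−y|)| |x−y|^{-n} g(y) dy ≥ (1−ε)(|Ω_ε(x/|x|)| − ε) / ((1+√ε)^n |x|^n), and moreover Ω_ε((x−y)/|x−y|) has constant sign for y ∈ B(0,r), so the same lower bound holds for |T_{Ω_ε}(g)(x)| = |∫_{B(0,r)} Ω_ε((x−y)/|x−y|) |x−y|^{-n} g(y) dy|. -/

import Mathlib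

open MeasureTheory Metric Set ENNReal

noncomputable def sphereMeasure (n : ℕ) :
    Measure (sphere (0 : EuclideanSpace ℝ (Fin n)) 1) :=
  (volume : Measure (EuclideanSpace ℝ (Fin n))).toSphere


open Classical in
noncomputable def projSphere {n : ℕ} (hn : 1 ≤ n) (x : EuclideanSpace ℝ (Fin n)) :
    sphere (0 : EuclideanSpace ℝ (Fin n)) 1 :=
  if h : x = 0 then
    ⟨EuclideanSpace.single (⟨0, hn⟩ : Fin n) (1 : ℝ), by
      simp [mem_sphere_zero_iff_norm, EuclideanSpace.norm_single]⟩
  else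
    ⟨‖x‖⁻¹ • x, by
      simp [mem_sphere_zero_iff_norm, norm_smul, abs_of_nonneg,
        inv_mul_cancel₀ (norm_ne_zero_iff.mpr h)]⟩

lemma measurable_projSphere {n : ℕ} (hn : 1 ≤ n) : Measurable (projSphere hn) := by
  classical
  have h2 : Measurable fun x : EuclideanSpace ℝ (Fin n) =>
      ((projSphere hn x : EuclideanSpace ℝ (Fin n))) := by
    have he : (fun x : EuclideanSpace ℝ (Fin n) =>
        ((projSphere hn x : EuclideanSpace ℝ (Fin n)))) = fun x =>
        if x = 0 then EuclideanSpace.single (⟨0, hn⟩ : Fin n) (1 : ℝ) else ‖x‖⁻¹ • x := by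
      funext x; by_cases h : x = 0 <;> simp [projSphere, h]
    rw [he]
    exact Measurable.ite (measurableSet_eq) measurable_const
      ((measurable_norm.inv).smul measurable_id)
  exact h2.subtype_mk

/-- Lower pointwise control of the singular integral on the set where |Ω_ε| > ε. -/
theorem stmt_19 {n : ℕ} (hn : 1 ≤ n) (ε r R : ℝ) (hε0 : 0 < ε) (hε1 : ε < 1) (hr : 0 < r)
    (Ωe : sphere (0 : EuclideanSpace ℝ (Fin n)) 1 → ℝ) (hcont : Continuous Ωe)
    (hker : ∀ x y : EuclideanSpace ℝ (Fin n), R < ‖x‖ → ‖y‖ ≤ r →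
      |Ωe (projSphere hn (x - y)) - Ωe (projSphere hn x)| < ε ∧
      (1 - Real.sqrt ε) * ‖x‖ < ‖x - y‖ ∧ ‖x - y‖ < (1 + Real.sqrt ε) * ‖x‖)
    (g : EuclideanSpace ℝ (Fin n) → ℝ) (hgint : Integrable g)
    (hg0 : ∀ y, 0 ≤ g y) (hsupp : Function.support g ⊆ ball (0 : EuclideanSpace ℝ (Fin n)) r)
    (hgle : ∫ y, g y ≤ 1) (hgge : 1 - ε ≤ ∫ y, g y)
    (x : EuclideanSpace ℝ (Fin n)) (hx : R < ‖x‖)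
    (hbig : ε < |Ωe (projSphere hn x)|) :
    (1 - ε) * (|Ωe (projSphere hn x)| - ε) / ((1 + Real.sqrt ε) ^ n * ‖x‖ ^ n) ≤
      (∫ y in ball (0 : EuclideanSpace ℝ (Fin n)) r,
        |Ωe (projSphere hn (x - y))| * ‖x - y‖ ^ (-(n : ℝ)) * g y) ∧
    (1 - ε) * (|Ωe (projSphere hn x)| - ε) / ((1 + Real.sqrt ε) ^ n * ‖x‖ ^ n) ≤
      |∫ y in ball (0 : EuclideanSpace ℝ (Fin n)) r,
        Ωe (projSphere hn (x - y)) * ‖x - y‖ ^ (-(n : ℝ)) * g y| := by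
  have hsq1 : Real.sqrt ε < 1 := by
    rw [show (1:ℝ) = Real.sqrt 1 by simp]
    exact Real.sqrt_lt_sqrt hε0.le hε1
  have hsq0 : 0 < 1 - Real.sqrt ε := by linarith
  -- x ≠ 0
  have hx0 : 0 < ‖x‖ := by
    by_contra h
    push_neg at h
    have hxe : ‖x‖ = 0 := le_antisymm h (norm_nonneg x)
    obtain ⟨-, h2, -⟩ := hker x 0 hx (by simpa using hr.le)
    rw [sub_zero, hxe, mul_zero] at h2
    exact lt_irrefl 0 h2
  set a := |Ωe (projSphere hn x)| with ha
  set c := a - ε with hc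
  have hcpos : 0 < c := by simp [hc]; linarith
  set D := (1 + Real.sqrt ε) ^ n * ‖x‖ ^ n with hD
  have hDpos : 0 < D := by
    apply mul_pos (pow_pos (by linarith [Real.sqrt_nonneg ε]) n) (pow_pos hx0 n)
  set K := D⁻¹ with hK
  have hKpos : 0 < K := inv_pos.mpr hDpos
  -- pointwise facts on the ball
  have hyball : ∀ y ∈ ball (0 : EuclideanSpace ℝ (Fin n)) r, ‖y‖ ≤ r := fun y hy =>
    (mem_ball_zero_iff.mp hy).le
  have hxy0 : ∀ y ∈ ball (0 : EuclideanSpace ℝ (Fin n)) r, 0 < ‖x - y‖ := by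
    intro y hy
    obtain ⟨-, h2, -⟩ := hker x y hx (hyball y hy)
    exact lt_trans (mul_pos hsq0 hx0) h2
  have hpow_lb : ∀ y ∈ ball (0 : EuclideanSpace ℝ (Fin n)) r,
      K ≤ ‖x - y‖ ^ (-(n : ℝ)) := by
    intro y hy
    obtain ⟨-, -, h3⟩ := hker x y hx (hyball y hy)
    have h0 := hxy0 y hy
    rw [Real.rpow_neg h0.le, Real.rpow_natCast, hK, hD, ← mul_pow]
    exact inv_anti₀ (pow_pos h0 n) (pow_le_pow_left₀ h0.le h3.le n)
  have habs_lb : ∀ y ∈ ball (0 : EuclideanSpace ℝ (Fin n)) r,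
      c ≤ |Ωe (projSphere hn (x - y))| := by
    intro y hy
    obtain ⟨h1, -, -⟩ := hker x y hx (hyball y hy)
    have := abs_sub_abs_le_abs_sub (Ωe (projSphere hn x)) (Ωe (projSphere hn (x - y)))
    rw [abs_sub_comm] at this
    simp only [hc, ha]
    linarith
  -- the first integrand
  set P : EuclideanSpace ℝ (Fin n) → ℝ :=
    fun y => |Ωe (projSphere hn (x - y))| * ‖x - y‖ ^ (-(n : ℝ)) * g y with hP
  have hkey : ∀ y ∈ ball (0 : EuclideanSpace ℝ (Fin n)) r, c * K * g y ≤ P y := by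
    intro y hy
    exact mul_le_mul_of_nonneg_right
      (mul_le_mul (habs_lb y hy) (hpow_lb y hy) hKpos.le (abs_nonneg _)) (hg0 y)
  -- measurability
  have hmeas : Measurable fun y : EuclideanSpace ℝ (Fin n) =>
      |Ωe (projSphere hn (x - y))| * ‖x - y‖ ^ (-(n : ℝ)) := by
    have hm1 : Measurable fun y : EuclideanSpace ℝ (Fin n) => Ωe (projSphere hn (x - y)) :=
      (hcont.measurable.comp (measurable_projSphere hn)).comp
        (measurable_const.sub measurable_id)
    have hrw : (fun y : EuclideanSpace ℝ (Fin n) => ‖x - y‖ ^ (-(n : ℝ))) =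
        fun y => (‖x - y‖ ^ n)⁻¹ := funext fun y => by
      rw [Real.rpow_neg (norm_nonneg _), Real.rpow_natCast]
    have hm2 : Measurable fun y : EuclideanSpace ℝ (Fin n) => ‖x - y‖ ^ (-(n : ℝ)) := by
      rw [hrw]
      exact ((measurable_const.sub measurable_id).norm.pow_const n).inv
    exact hm1.abs.mul hm2
  have hmeasP : AEStronglyMeasurable P (volume.restrict (ball (0 : EuclideanSpace ℝ (Fin n)) r)) :=
    ((hmeas.aestronglyMeasurable.mono_measure Measure.restrict_le_self).mul
      (hgint.aestronglyMeasurable.restrict))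
  -- integrability of P on the ball
  set C : ℝ := (a + ε) * ((1 - Real.sqrt ε) * ‖x‖) ^ (-(n : ℝ)) with hCdef
  have hintC : IntegrableOn (fun y => C * g y) (ball (0 : EuclideanSpace ℝ (Fin n)) r) :=
    (hgint.const_mul C).integrableOn
  have hintP : IntegrableOn P (ball (0 : EuclideanSpace ℝ (Fin n)) r) := by
    apply Integrable.mono' hintC hmeasP
    filter_upwards [ae_restrict_mem measurableSet_ball] with y hy
    obtain ⟨h1, h2, -⟩ := hker x y hx (hyball y hy)
    have h0 := hxy0 y hy
    have hPnn : 0 ≤ P y :=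
      mul_nonneg (mul_nonneg (abs_nonneg _) (Real.rpow_nonneg (norm_nonneg _) _)) (hg0 y)
    rw [Real.norm_of_nonneg hPnn]
    have hb1 : |Ωe (projSphere hn (x - y))| ≤ a + ε := by
      have := abs_sub_abs_le_abs_sub (Ωe (projSphere hn (x - y))) (Ωe (projSphere hn x))
      simp only [ha]; linarith
    have hb2 : ‖x - y‖ ^ (-(n : ℝ)) ≤ ((1 - Real.sqrt ε) * ‖x‖) ^ (-(n : ℝ)) := by
      rw [Real.rpow_neg h0.le, Real.rpow_neg (mul_pos hsq0 hx0).le, Real.rpow_natCast,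
        Real.rpow_natCast]
      exact inv_anti₀ (pow_pos (mul_pos hsq0 hx0) n)
        (pow_le_pow_left₀ (mul_pos hsq0 hx0).le h2.le n)
    calc P y ≤ (a + ε) * ((1 - Real.sqrt ε) * ‖x‖) ^ (-(n : ℝ)) * g y :=
          mul_le_mul_of_nonneg_right
            (mul_le_mul hb1 hb2 (Real.rpow_nonneg (norm_nonneg _) _) (by linarith)) (hg0 y)
      _ = C * g y := by rw [hCdef]
  -- lower bound for the first integral
  have hint_low : IntegrableOn (fun y => c * K * g y)
      (ball (0 : EuclideanSpace ℝ (Fin n)) r) := (hgint.const_mul (c * K)).integrableOn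
  have hstep : ∫ y in ball (0 : EuclideanSpace ℝ (Fin n)) r, c * K * g y ≤
      ∫ y in ball (0 : EuclideanSpace ℝ (Fin n)) r, P y :=
    setIntegral_mono_on hint_low hintP measurableSet_ball hkey
  have hgball : ∫ y in ball (0 : EuclideanSpace ℝ (Fin n)) r, g y = ∫ y, g y :=
    setIntegral_eq_integral_of_forall_compl_eq_zero fun y hy =>
      Function.notMem_support.mp (fun hs => hy (hsupp hs))
  have hconst : ∫ y in ball (0 : EuclideanSpace ℝ (Fin n)) r, c * K * g y
      = c * K * ∫ y, g y := by
    rw [integral_const_mul, hgball]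
  have hfirst : (1 - ε) * c / D ≤ ∫ y in ball (0 : EuclideanSpace ℝ (Fin n)) r, P y := by
    calc (1 - ε) * c / D = c * K * (1 - ε) := by rw [div_eq_mul_inv, ← hK]; ring
      _ ≤ c * K * ∫ y, g y :=
          mul_le_mul_of_nonneg_left hgge (mul_nonneg hcpos.le hKpos.le)
      _ = ∫ y in ball (0 : EuclideanSpace ℝ (Fin n)) r, c * K * g y := hconst.symm
      _ ≤ _ := hstep
  refine ⟨hfirst, ?_⟩
  -- sign constancy
  set s : ℝ := if 0 ≤ Ωe (projSphere hn x) then 1 else -1 with hs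
  have hsign : ∀ y ∈ ball (0 : EuclideanSpace ℝ (Fin n)) r,
      s * Ωe (projSphere hn (x - y)) = |Ωe (projSphere hn (x - y))| := by
    intro y hy
    obtain ⟨h1, -, -⟩ := hker x y hx (hyball y hy)
    have h1' := abs_lt.mp h1
    by_cases hpos : 0 ≤ Ωe (projSphere hn x)
    · have hax : a = Ωe (projSphere hn x) := abs_of_nonneg hpos
      have : 0 < Ωe (projSphere hn (x - y)) := by rw [hax] at hbig; linarith [h1'.1]
      rw [hs, if_pos hpos, one_mul, abs_of_pos this]
    · push_neg at hpos
      have hax : a = -Ωe (projSphere hn x) := abs_of_neg hpos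
      have : Ωe (projSphere hn (x - y)) < 0 := by rw [hax] at hbig; linarith [h1'.2]
      rw [hs, if_neg (not_le.mpr hpos), abs_of_neg this]; ring
  have heq : ∫ y in ball (0 : EuclideanSpace ℝ (Fin n)) r, P y =
      s * ∫ y in ball (0 : EuclideanSpace ℝ (Fin n)) r,
        Ωe (projSphere hn (x - y)) * ‖x - y‖ ^ (-(n : ℝ)) * g y := by
    rw [← integral_const_mul]
    apply setIntegral_congr_fun measurableSet_ball
    intro y hy
    simp only [hP]
    rw [← hsign y hy]
    ring
  have habs_s : |s| = 1 := by rw [hs]; split_ifs <;> simp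
  calc (1 - ε) * c / D ≤ ∫ y in ball (0 : EuclideanSpace ℝ (Fin n)) r, P y := hfirst
    _ ≤ |∫ y in ball (0 : EuclideanSpace ℝ (Fin n)) r, P y| := le_abs_self _
    _ = |s| * |∫ y in ball (0 : EuclideanSpace ℝ (Fin n)) r,
          Ωe (projSphere hn (x - y)) * ‖x - y‖ ^ (-(n : ℝ)) * g y| := by
        rw [heq, abs_mul]
    _ = _ := by rw [habs_s, one_mul]
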